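/- Let F be a field with at least 5 elements. Then the set {(x, x⁻¹) : x ∈ F, x ≠ 0} generates F² = F × F as an additive group. -/

import Mathlib

/-- Over a field with at least 5 elements, the set `{(x, x⁻¹) : x ≠ 0}` generates
`F × F` as an additive group. -/
theorem stmt_5 {F : Type*} [Field F] (hF : 5 ≤ Cardinal.mk F) :
    AddSubgroup.closure {p : F × F | ∃ x : F, x ≠ 0 ∧ p = (x, x⁻¹)} = ⊤ := by
  set S : Set (F × F) := {p : F × F | ∃ x : F, x ≠ 0 ∧ p = (x, x⁻¹)} with hS
  -- find t with t ≠ 0, t + 1 ≠ 0, t^2 + t + 1 ≠ 0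
  obtain ⟨t, ht⟩ : ∃ t : F,
      (Polynomial.X * (Polynomial.X + 1) *
        (Polynomial.X ^ 2 + Polynomial.X + 1) : Polynomial F).eval t ≠ 0 := by
    apply Polynomial.exists_eval_ne_zero_of_natDegree_lt_card
    · refine mul_ne_zero (mul_ne_zero Polynomial.X_ne_zero ?_) ?_
      · intro h
        simpa using congrArg (Polynomial.coeff · 0) h
      · intro h
        simpa [Polynomial.coeff_add, Polynomial.coeff_X_pow] using
          congrArg (Polynomial.coeff · 0) h
    · have hdeg : (Polynomial.X * (Polynomial.X + 1) *
          (Polynomial.X ^ 2 + Polynomial.X + 1) : Polynomial F).natDegree ≤ 4 := by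
        compute_degree
      calc ((Polynomial.X * (Polynomial.X + 1) *
          (Polynomial.X ^ 2 + Polynomial.X + 1) : Polynomial F).natDegree : Cardinal)
          ≤ 4 := by exact_mod_cast hdeg
        _ < 5 := by norm_num
        _ ≤ Cardinal.mk F := hF
  simp only [Polynomial.eval_mul, Polynomial.eval_add, Polynomial.eval_pow,
    Polynomial.eval_X, Polynomial.eval_one, mul_ne_zero_iff] at ht
  obtain ⟨⟨ht0, ht1⟩, ht2⟩ := ht
  have hmem : ∀ x : F, x ≠ 0 → ((x, x⁻¹) : F × F) ∈ AddSubgroup.closure S :=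
    fun x hx => AddSubgroup.subset_closure ⟨x, hx, rfl⟩
  set c : F := (t ^ 2 + t + 1) / (t * (t + 1)) with hc
  have hcne : c ≠ 0 := div_ne_zero ht2 (mul_ne_zero ht0 ht1)
  -- every (0, w) is in the closure
  have key : ∀ w : F, ((0, w) : F × F) ∈ AddSubgroup.closure S := by
    intro w
    rcases eq_or_ne w 0 with rfl | hw
    · exact zero_mem _
    · set x : F := c / w with hx
      have hxne : x ≠ 0 := div_ne_zero hcne hw
      have heq : ((0, w) : F × F) =
          (x, x⁻¹) + (t * x, (t * x)⁻¹) + (-((1 + t) * x), (-((1 + t) * x))⁻¹) := by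
        have h1t : (1 : F) + t ≠ 0 := by rwa [add_comm] at ht1
        refine Prod.ext ?_ ?_
        · simp only [Prod.fst_add]
          ring
        · have htt : t * (t + 1) ≠ 0 := mul_ne_zero ht0 ht1
          have ht2' : t * (t + 1) + 1 ≠ 0 := by
            rw [show t * (t + 1) + 1 = t ^ 2 + t + 1 by ring]; exact ht2
          simp only [Prod.snd_add, hx, hc]
          field_simp
          ring
      rw [heq]
      exact add_mem (add_mem (hmem _ hxne) (hmem _ (mul_ne_zero ht0 hxne)))
        (hmem _ (neg_ne_zero.mpr (mul_ne_zero (by rwa [add_comm] at ht1) hxne)))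
  rw [eq_top_iff]
  rintro ⟨a, b⟩ -
  have ha : ((a, 0) : F × F) ∈ AddSubgroup.closure S := by
    rcases eq_or_ne a 0 with rfl | ha
    · exact zero_mem _
    · have : ((a, 0) : F × F) = (a, a⁻¹) + (0, -a⁻¹) := by
        refine Prod.ext (by simp) (by simp)
      rw [this]
      exact add_mem (hmem a ha) (key _)
  have : ((a, b) : F × F) = (a, 0) + (0, b) := by simp
  rw [this]
  exact add_mem ha (key b)
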